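/- arXiv:2406.04458 — 5 statements merged into one kernel-verified Lean document; each statement's English description precedes it below -/
import Mathlib

section
/- Let N ≥ 1, let τ_1, …, τ_N be pairwise-distinct positive reals and d_1, …, d_N positive reals. Consider E₀(λ) = λ + (3√2/2) ∑_{j=1}^N (α_j/d_j) (1/√(1+τ_j λ) − 1) for λ > −1/max τ_j. Then the Taylor expansion of E₀ at λ = 0 is E₀(λ) = (1 − (3√2/4) ∑_j α_j τ_j/d_j) λ + (3√2/2) ∑_{k=2}^∞ (−1)^k ((2k−1)!!/(2k)!!) (∑_j α_j τ_j^k/d_j) λ^k. Moreover λ = 0 is a zero of E₀ of order exactly N+1 if and only if α_j = (2√2 d_j)/(3 τ_j) · ∏_{k ≠ j} τ_k/(τ_k − τ_j) for all j. -/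
open Finset

noncomputable def bb (k : ℕ) : ℝ :=
  (-1 : ℝ) ^ k * ((Nat.doubleFactorial (2 * k - 1) : ℝ) / (Nat.doubleFactorial (2 * k) : ℝ))

lemma df_odd_succ (k : ℕ) :
    Nat.doubleFactorial (2 * (k + 1) - 1) = (2 * k + 1) * Nat.doubleFactorial (2 * k - 1) := by
  cases k with
  | zero => rfl
  | succ m =>
    have h : 2 * (m + 1 + 1) - 1 = (2 * (m + 1) - 1) + 2 := by omega
    rw [h, Nat.doubleFactorial_add_two]
    congr 1

lemma df_even_succ (k : ℕ) :
    Nat.doubleFactorial (2 * (k + 1)) = (2 * k + 2) * Nat.doubleFactorial (2 * k) := by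
  have h : 2 * (k + 1) = 2 * k + 2 := by ring
  rw [h, Nat.doubleFactorial_add_two]

lemma df_pos (n : ℕ) : 0 < Nat.doubleFactorial n := Nat.doubleFactorial_pos n

lemma df_le (k : ℕ) : Nat.doubleFactorial (2 * k - 1) ≤ Nat.doubleFactorial (2 * k) := by
  induction k with
  | zero => exact le_refl _
  | succ m ih =>
    rw [df_odd_succ, df_even_succ]
    exact Nat.mul_le_mul (by omega) ih

lemma bb_ne (k : ℕ) : bb k ≠ 0 := by
  unfold bb
  have h1 : (0:ℝ) < Nat.doubleFactorial (2 * k - 1) := by exact_mod_cast df_pos _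
  have h2 : (0:ℝ) < Nat.doubleFactorial (2 * k) := by exact_mod_cast df_pos _
  positivity

lemma bb_abs (k : ℕ) : |bb k| ≤ 1 := by
  unfold bb
  have h1 : (0:ℝ) ≤ Nat.doubleFactorial (2 * k - 1) := by positivity
  have h2 : (0:ℝ) < Nat.doubleFactorial (2 * k) := by exact_mod_cast df_pos _
  rw [abs_mul, abs_pow, abs_neg, abs_one, one_pow, one_mul, abs_div,
    abs_of_nonneg h1, abs_of_nonneg h2.le]
  rw [div_le_one h2]
  exact_mod_cast df_le k

lemma bb_zero : bb 0 = 1 := by norm_num [bb]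

lemma bb_one : bb 1 = -(1/2) := by norm_num [bb, Nat.doubleFactorial]

lemma bb_rec (k : ℕ) : (2 * (k:ℝ) + 2) * bb (k + 1) = -((2 * k + 1) * bb k) := by
  unfold bb
  rw [df_odd_succ, df_even_succ, pow_succ]
  have h1 : (0:ℝ) < Nat.doubleFactorial (2 * k - 1) := by exact_mod_cast df_pos _
  have h2 : (0:ℝ) < Nat.doubleFactorial (2 * k) := by exact_mod_cast df_pos _
  push_cast
  field_simp
noncomputable def bS (x : ℝ) : ℝ := ∑' k, bb k * x ^ k
noncomputable def bS' (x : ℝ) : ℝ := ∑' k, bb k * ((k : ℝ) * x ^ (k - 1))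

lemma summable_bb {x : ℝ} (hx : |x| < 1) : Summable fun k => bb k * x ^ k := by
  refine Summable.of_norm_bounded (summable_geometric_of_lt_one (abs_nonneg x) hx) fun k => ?_
  rw [norm_mul, norm_pow, Real.norm_eq_abs, Real.norm_eq_abs]
  calc |bb k| * |x| ^ k ≤ 1 * |x| ^ k := by gcongr; exact bb_abs k
    _ = |x| ^ k := one_mul _

lemma summable_aux {r : ℝ} (h0 : 0 ≤ r) (h1 : r < 1) :
    Summable fun n : ℕ => (n : ℝ) * r ^ (n - 1) := by
  rw [← summable_nat_add_iff 1]
  simp only [Nat.add_sub_cancel]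
  have h2 : Summable fun n : ℕ => (n : ℝ) ^ 1 * r ^ n :=
    summable_pow_mul_geometric_of_norm_lt_one 1 (by rwa [Real.norm_eq_abs, abs_of_nonneg h0])
  have h3 : Summable fun n : ℕ => r ^ n := summable_geometric_of_lt_one h0 h1
  have := h2.add h3
  refine this.congr fun n => ?_
  push_cast
  ring

lemma summable_bb' {x : ℝ} (hx : |x| < 1) :
    Summable fun k : ℕ => bb k * ((k : ℝ) * x ^ (k - 1)) := by
  refine Summable.of_norm_bounded (summable_aux (abs_nonneg x) hx) fun k => ?_
  rw [Real.norm_eq_abs, abs_mul, abs_mul, abs_pow, Nat.abs_cast]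
  calc |bb k| * ((k:ℝ) * |x| ^ (k-1)) ≤ 1 * ((k:ℝ) * |x| ^ (k-1)) := by
        gcongr; exact bb_abs k
    _ = (k:ℝ) * |x| ^ (k-1) := one_mul _

lemma hasDerivAt_bS {x : ℝ} (hx : |x| < 1) : HasDerivAt bS (bS' x) x := by
  set r : ℝ := (|x| + 1) / 2 with hr
  have hxr : |x| < r := by rw [hr]; linarith
  have hr0 : 0 < r := lt_of_le_of_lt (abs_nonneg x) hxr
  have hr1 : r < 1 := by rw [hr]; linarith
  have hmem : x ∈ Set.Ioo (-r) r := by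
    constructor
    · linarith [neg_abs_le x]
    · linarith [le_abs_self x]
  have := hasDerivAt_tsum_of_isPreconnected
    (u := fun n : ℕ => (n : ℝ) * r ^ (n - 1))
    (g := fun n y => bb n * y ^ n)
    (g' := fun n y => bb n * ((n : ℝ) * y ^ (n - 1)))
    (summable_aux hr0.le hr1) isOpen_Ioo (convex_Ioo _ _).isPreconnected
    (fun n y _ => ((hasDerivAt_pow n y).const_mul (bb n)))
    (fun n y hy => ?_) hmem (summable_bb hx) hmem
  · exact this
  · rw [Real.norm_eq_abs, abs_mul, abs_mul, abs_pow, Nat.abs_cast]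
    have hyr : |y| ≤ r := by
      rcases hy with ⟨h1, h2⟩
      rw [abs_le]; constructor <;> linarith
    calc |bb n| * ((n:ℝ) * |y| ^ (n-1)) ≤ 1 * ((n:ℝ) * r ^ (n-1)) := by
          refine mul_le_mul (bb_abs n) ?_ (by positivity) (by norm_num)
          gcongr
      _ = (n:ℝ) * r ^ (n-1) := one_mul _

lemma bS_ode {x : ℝ} (hx : |x| < 1) : 2 * (1 + x) * bS' x + bS x = 0 := by
  have H1 : HasSum (fun k => bb k * x ^ k) (bS x) := (summable_bb hx).hasSum
  have H2 : HasSum (fun k : ℕ => bb k * ((k : ℝ) * x ^ (k - 1))) (bS' x) :=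
    (summable_bb' hx).hasSum
  have H2' : HasSum (fun k : ℕ => bb (k + 1) * (((k : ℝ) + 1) * x ^ k)) (bS' x) := by
    have h := (hasSum_nat_add_iff' (f := fun k : ℕ => bb k * ((k : ℝ) * x ^ (k - 1))) 1).2 H2
    simp only [Finset.range_one, Finset.sum_singleton, Nat.cast_zero, zero_mul, mul_zero,
      sub_zero, Nat.add_sub_cancel, Nat.cast_add, Nat.cast_one] at h
    exact h
  have H2x : HasSum (fun k : ℕ => bb k * ((k : ℝ) * x ^ k)) (x * bS' x) := by
    have heq : (fun k : ℕ => x * (bb k * ((k:ℝ) * x ^ (k-1))))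
        = fun k : ℕ => bb k * ((k:ℝ) * x ^ k) := by
      funext k
      cases k with
      | zero => simp
      | succ m => simp only [Nat.add_sub_cancel, pow_succ]; push_cast; ring
    exact heq ▸ H2.mul_left x
  have HL : HasSum (fun k : ℕ => 2 * (bb (k + 1) * (((k : ℝ) + 1) * x ^ k))) (2 * bS' x) :=
    H2'.mul_left 2
  have HR : HasSum (fun k : ℕ => -(2 * (bb k * ((k : ℝ) * x ^ k)) + bb k * x ^ k))
      (-(2 * (x * bS' x) + bS x)) := ((H2x.mul_left 2).add H1).neg
  have heq2 : (fun k : ℕ => 2 * (bb (k + 1) * (((k : ℝ) + 1) * x ^ k)))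
      = fun k : ℕ => -(2 * (bb k * ((k : ℝ) * x ^ k)) + bb k * x ^ k) := by
    funext k
    have h := bb_rec k
    linear_combination x ^ k * h
  rw [heq2] at HL
  have := HL.unique HR
  linear_combination this
lemma bS_zero : bS 0 = 1 := by
  unfold bS
  rw [tsum_eq_single 0 (fun n hn => by simp [zero_pow hn])]
  simp [bb_zero]

lemma gDeriv {y : ℝ} (hy : y ∈ Set.Ioo (-1 : ℝ) 1) :
    HasDerivAt (fun z => bS z * Real.sqrt (1 + z)) 0 y := by
  obtain ⟨hy1, hy2⟩ := hy
  have h1y : 0 < 1 + y := by linarith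
  have hay : |y| < 1 := abs_lt.2 ⟨hy1, hy2⟩
  have hsq : Real.sqrt (1 + y) ≠ 0 := ne_of_gt (Real.sqrt_pos.2 h1y)
  have hder : HasDerivAt (fun z : ℝ => Real.sqrt (1 + z)) (1 / (2 * Real.sqrt (1 + y))) y := by
    have h := ((hasDerivAt_id y).const_add (1:ℝ)).sqrt (by simpa using h1y.ne')
    simpa using h
  have hprod := (hasDerivAt_bS hay).mul hder
  have hval : bS' y * Real.sqrt (1 + y) + bS y * (1 / (2 * Real.sqrt (1 + y))) = 0 := by
    have hode := bS_ode hay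
    have hss : Real.sqrt (1 + y) * Real.sqrt (1 + y) = 1 + y := Real.mul_self_sqrt h1y.le
    field_simp
    linear_combination hode + 2 * bS' y * hss
  rw [hval] at hprod
  exact hprod

lemma hasSum_inv_sqrt {x : ℝ} (hx : |x| < 1) :
    HasSum (fun k => bb k * x ^ k) (1 / Real.sqrt (1 + x)) := by
  obtain ⟨hx1, hx2⟩ := abs_lt.1 hx
  have h1x : 0 < 1 + x := by linarith
  have hsq : 0 < Real.sqrt (1 + x) := Real.sqrt_pos.2 h1x
  have key : bS x * Real.sqrt (1 + x) = 1 := by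
    set g : ℝ → ℝ := fun z => bS z * Real.sqrt (1 + z) with hg
    have hmem : ∀ z ∈ Set.Icc (min 0 x) (max 0 x), z ∈ Set.Ioo (-1 : ℝ) 1 := by
      intro z hz
      obtain ⟨h1, h2⟩ := hz
      constructor
      · have : min 0 x > -1 := by rcases le_total 0 x with h | h <;> simp [min_eq_left, min_eq_right, h] <;> linarith
        linarith
      · have : max 0 x < 1 := by rcases le_total 0 x with h | h <;> simp [max_eq_left, max_eq_right, h] <;> linarith
        linarith
    have hcont : ContinuousOn g (Set.Icc (min 0 x) (max 0 x)) := fun z hz =>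
      ((gDeriv (hmem z hz)).continuousAt).continuousWithinAt
    have hderiv : ∀ z ∈ Set.Ico (min 0 x) (max 0 x), HasDerivWithinAt g 0 (Set.Ici z) z :=
      fun z hz => (gDeriv (hmem z ⟨hz.1, hz.2.le⟩)).hasDerivWithinAt
    have hconst := constant_of_has_deriv_right_zero hcont hderiv
    have h0mem : (0:ℝ) ∈ Set.Icc (min 0 x) (max 0 x) :=
      ⟨min_le_left 0 x, le_max_left 0 x⟩
    have hxmem : x ∈ Set.Icc (min 0 x) (max 0 x) :=
      ⟨min_le_right 0 x, le_max_right 0 x⟩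
    have e1 := hconst 0 h0mem
    have e2 := hconst x hxmem
    have g0 : g 0 = 1 := by simp [hg, bS_zero]
    have : g x = 1 := by rw [e2, ← e1, g0]
    simpa [hg] using this
  have hval : bS x = 1 / Real.sqrt (1 + x) := by
    field_simp at key ⊢
    linarith [key]
  exact hval ▸ (summable_bb hx).hasSum
lemma eval_basis_zero {N : ℕ} (τ : Fin N → ℝ) (hτ : Function.Injective τ) (j : Fin N) :
    (Lagrange.basis Finset.univ τ j).eval 0
      = ∏ k ∈ Finset.univ.erase j, τ k / (τ k - τ j) := by
  rw [Lagrange.basis, Polynomial.eval_prod]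
  refine Finset.prod_congr rfl fun k hk => ?_
  rw [Lagrange.basisDivisor, Polynomial.eval_mul, Polynomial.eval_C, Polynomial.eval_sub,
    Polynomial.eval_X, Polynomial.eval_C]
  have hkj : τ k ≠ τ j := fun h => (Finset.mem_erase.1 hk).1 (hτ h)
  have h1 : τ j - τ k ≠ 0 := fun h => hkj (by linarith [sub_eq_zero.1 h])
  have h2 : τ k - τ j ≠ 0 := sub_ne_zero.2 hkj
  field_simp
  ring

lemma sum_w_eval {N : ℕ} (τ : Fin N → ℝ) (hτ : Function.Injective τ)
    (p : Polynomial ℝ) (hp : p.degree < (N : ℕ)) :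
    ∑ j, p.eval (τ j) * (Lagrange.basis Finset.univ τ j).eval 0 = p.eval 0 := by
  have hvs : Set.InjOn τ (Finset.univ : Finset (Fin N)) := hτ.injOn
  have hcard : (Finset.univ : Finset (Fin N)).card = N := by simp
  have heq := Lagrange.eq_interpolate (s := Finset.univ) (v := τ) hvs (by rwa [hcard])
  conv_rhs => rw [heq]
  rw [Lagrange.interpolate_apply, Polynomial.eval_finset_sum]
  exact Finset.sum_congr rfl fun j _ => by rw [Polynomial.eval_mul, Polynomial.eval_C]
lemma part1 (N : ℕ) (τ d α : Fin N → ℝ)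
    (hτpos : ∀ j, 0 < τ j)
    (c : ℕ → ℝ)
    (hc : ∀ k, c k = if k = 0 then 0 else if k = 1 then
        1 - 3 * Real.sqrt 2 / 4 * ∑ j, α j * τ j / d j
      else (3 * Real.sqrt 2 / 2) * (-1 : ℝ) ^ k *
        ((Nat.doubleFactorial (2 * k - 1) : ℝ) / (Nat.doubleFactorial (2 * k) : ℝ)) *
        ∑ j, α j * τ j ^ k / d j) :
    ∀ l : ℝ, (∀ j, τ j * |l| < 1) →
      HasSum (fun k : ℕ => c k * l ^ k)
        (l + 3 * Real.sqrt 2 / 2 *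
          ∑ j, α j / d j * (1 / Real.sqrt (1 + τ j * l) - 1)) := by
  intro l hl
  have hτl : ∀ j, |τ j * l| < 1 := fun j => by
    rw [abs_mul, abs_of_pos (hτpos j)]; exact hl j
  set K : ℝ := 3 * Real.sqrt 2 / 2 with hK
  have Hsum : HasSum (fun k => ∑ j, α j / d j * (bb k * (τ j * l) ^ k))
      (∑ j, α j / d j * (1 / Real.sqrt (1 + τ j * l))) :=
    hasSum_sum fun j _ => (hasSum_inv_sqrt (hτl j)).mul_left _
  have H2 := Hsum.mul_left K
  have HD1 : HasSum (fun k : ℕ => if k = 0 then -(K * ∑ j, α j / d j) else 0)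
      (-(K * ∑ j, α j / d j)) := hasSum_ite_eq 0 _
  have HD2 : HasSum (fun k : ℕ => if k = 1 then l else 0) l := hasSum_ite_eq 1 _
  have H := (H2.add HD1).add HD2
  have hfun : ∀ k : ℕ, (K * ∑ j, α j / d j * (bb k * (τ j * l) ^ k)
      + (if k = 0 then -(K * ∑ j, α j / d j) else 0)) + (if k = 1 then l else 0)
      = c k * l ^ k := by
    intro k
    match k with
    | 0 => simp [hc 0, bb_zero]
    | 1 =>
      have h1 : ∀ j : Fin N, α j / d j * (bb 1 * (τ j * l) ^ 1)
          = -(l / 2) * (α j * τ j / d j) := fun j => by rw [bb_one]; ring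
      rw [Finset.sum_congr rfl fun j _ => h1 j, ← Finset.mul_sum, hc 1]
      simp only [if_neg one_ne_zero, if_pos rfl, reduceIte]
      ring
    | (n + 2) =>
      have hck : c (n + 2) = K * (-1 : ℝ) ^ (n + 2) *
          ((Nat.doubleFactorial (2 * (n + 2) - 1) : ℝ) /
            (Nat.doubleFactorial (2 * (n + 2)) : ℝ)) *
          ∑ j, α j * τ j ^ (n + 2) / d j := by
        rw [hc (n + 2), if_neg (by omega : ¬ n + 2 = 0), if_neg (by omega : ¬ n + 2 = 1)]
      have h1 : ∀ j : Fin N, α j / d j * (bb (n + 2) * (τ j * l) ^ (n + 2))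
          = ((-1 : ℝ) ^ (n + 2) * ((Nat.doubleFactorial (2 * (n + 2) - 1) : ℝ) /
            (Nat.doubleFactorial (2 * (n + 2)) : ℝ)) * l ^ (n + 2))
            * (α j * τ j ^ (n + 2) / d j) := fun j => by
        unfold bb; rw [mul_pow]; ring
      rw [Finset.sum_congr rfl fun j _ => h1 j, ← Finset.mul_sum, hck]
      simp only [if_neg (by omega : ¬ n + 2 = 0), if_neg (by omega : ¬ n + 2 = 1)]
      ring
  have hval : (K * ∑ j, α j / d j * (1 / Real.sqrt (1 + τ j * l))
      + -(K * ∑ j, α j / d j)) + l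
      = l + K * ∑ j, α j / d j * (1 / Real.sqrt (1 + τ j * l) - 1) := by
    rw [show (fun j : Fin N => α j / d j * (1 / Real.sqrt (1 + τ j * l) - 1))
        = fun j => α j / d j * (1 / Real.sqrt (1 + τ j * l)) - α j / d j from
      funext fun j => by ring, Finset.sum_sub_distrib]
    ring
  rw [funext hfun, hval] at H
  exact H
lemma part2 (N : ℕ) (hN : 1 ≤ N) (τ d α : Fin N → ℝ)
    (hτpos : ∀ j, 0 < τ j) (hτ : Function.Injective τ) (hd : ∀ j, 0 < d j)
    (c : ℕ → ℝ)
    (hc : ∀ k, c k = if k = 0 then 0 else if k = 1 then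
        1 - 3 * Real.sqrt 2 / 4 * ∑ j, α j * τ j / d j
      else (3 * Real.sqrt 2 / 2) * (-1 : ℝ) ^ k *
        ((Nat.doubleFactorial (2 * k - 1) : ℝ) / (Nat.doubleFactorial (2 * k) : ℝ)) *
        ∑ j, α j * τ j ^ k / d j) :
    ((∀ k, 1 ≤ k → k ≤ N → c k = 0) ∧ c (N + 1) ≠ 0) ↔
      ∀ j, α j = 2 * Real.sqrt 2 * d j / (3 * τ j) *
        ∏ k ∈ Finset.univ.erase j, τ k / (τ k - τ j) := by
  have hs2 : Real.sqrt 2 * Real.sqrt 2 = 2 := Real.mul_self_sqrt (by norm_num)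
  have hs2pos : 0 < Real.sqrt 2 := Real.sqrt_pos.2 (by norm_num)
  have hvs : Set.InjOn τ (Finset.univ : Finset (Fin N)) := hτ.injOn
  have hKne : (3 * Real.sqrt 2 / 2 : ℝ) ≠ 0 := by positivity
  have hfac : ∀ k : ℕ,
      ((Nat.doubleFactorial (2 * k - 1) : ℝ) / (Nat.doubleFactorial (2 * k) : ℝ)) ≠ 0 := by
    intro k
    have h1 : (0:ℝ) < Nat.doubleFactorial (2 * k - 1) := by exact_mod_cast df_pos _
    have h2 : (0:ℝ) < Nat.doubleFactorial (2 * k) := by exact_mod_cast df_pos _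
    positivity
  have h14 : (3 * Real.sqrt 2 / 4) * (2 * Real.sqrt 2 / 3) = 1 := by
    linear_combination hs2 / 2
  have hS : ∀ k : ℕ, 1 ≤ k → (∑ j, α j * τ j ^ k / d j)
      = ∑ j, (α j * τ j / d j) * τ j ^ (k - 1) := by
    intro k hk
    obtain ⟨m, rfl⟩ := Nat.exists_eq_add_of_le hk
    refine Finset.sum_congr rfl fun j _ => ?_
    simp only [Nat.add_sub_cancel_left]
    rw [add_comm, pow_succ]
    ring
  constructor
  · rintro ⟨h0, _⟩
    -- moments
    have hmom : ∀ m : ℕ, m < N →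
        ∑ j, (α j * τ j / d j) * τ j ^ m = if m = 0 then 2 * Real.sqrt 2 / 3 else 0 := by
      intro m hm
      rcases Nat.eq_zero_or_pos m with rfl | hm1
      · have hc1 := h0 1 le_rfl hN
        rw [hc 1, if_neg one_ne_zero, if_pos rfl] at hc1
        have hsum : ∑ j, α j * τ j / d j = ∑ j, (α j * τ j / d j) * τ j ^ 0 := by
          simp
        rw [hsum] at hc1
        have heq : (3 * Real.sqrt 2 / 4) * ∑ j, (α j * τ j / d j) * τ j ^ 0
            = (3 * Real.sqrt 2 / 4) * (2 * Real.sqrt 2 / 3) := by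
          rw [h14]; linarith
        have := mul_left_cancel₀ (by positivity : (3 * Real.sqrt 2 / 4 : ℝ) ≠ 0) heq
        simpa using this
      · have hck := h0 (m + 1) (by omega) (by omega)
        rw [hc (m + 1), if_neg (by omega), if_neg (by omega)] at hck
        have hSm := hS (m + 1) (by omega)
        simp only [Nat.add_sub_cancel] at hSm
        rw [hSm] at hck
        have hne : (3 * Real.sqrt 2 / 2 : ℝ) * (-1 : ℝ) ^ (m + 1) *
            ((Nat.doubleFactorial (2 * (m + 1) - 1) : ℝ) /
              (Nat.doubleFactorial (2 * (m + 1)) : ℝ)) ≠ 0 :=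
          mul_ne_zero (mul_ne_zero hKne (pow_ne_zero _ (by norm_num))) (hfac _)
        have := (mul_eq_zero.1 hck).resolve_left hne
        rw [this, if_neg (by omega)]
    intro i
    have hNd : (Lagrange.basis Finset.univ τ i).natDegree < N := by
      rw [Lagrange.natDegree_basis hvs (Finset.mem_univ i), Finset.card_univ, Fintype.card_fin]
      omega
    have e1 : α i * τ i / d i
        = ∑ j, (α j * τ j / d j) * (Lagrange.basis Finset.univ τ i).eval (τ j) := by
      rw [Finset.sum_eq_single i]
      · rw [Lagrange.eval_basis_self hvs (Finset.mem_univ i), mul_one]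
      · intro j _ hji
        rw [Lagrange.eval_basis_of_ne (Ne.symm hji) (Finset.mem_univ j), mul_zero]
      · intro h; exact absurd (Finset.mem_univ i) h
    have e3 : α i * τ i / d i
        = 2 * Real.sqrt 2 / 3 * (Lagrange.basis Finset.univ τ i).coeff 0 := by
      rw [e1]
      have e2 : ∀ j : Fin N, (Lagrange.basis Finset.univ τ i).eval (τ j)
          = ∑ m ∈ Finset.range N, (Lagrange.basis Finset.univ τ i).coeff m * τ j ^ m :=
        fun j => Polynomial.eval_eq_sum_range' hNd _
      calc ∑ j, (α j * τ j / d j) * (Lagrange.basis Finset.univ τ i).eval (τ j)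
          = ∑ j, ∑ m ∈ Finset.range N,
              (Lagrange.basis Finset.univ τ i).coeff m * ((α j * τ j / d j) * τ j ^ m) := by
            refine Finset.sum_congr rfl fun j _ => ?_
            rw [e2 j, Finset.mul_sum]
            exact Finset.sum_congr rfl fun m _ => by ring
        _ = ∑ m ∈ Finset.range N,
              (Lagrange.basis Finset.univ τ i).coeff m * ∑ j, (α j * τ j / d j) * τ j ^ m := by
            rw [Finset.sum_comm]
            exact Finset.sum_congr rfl fun m _ => (Finset.mul_sum _ _ _).symm
        _ = ∑ m ∈ Finset.range N, (if m = 0 then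
              (Lagrange.basis Finset.univ τ i).coeff 0 * (2 * Real.sqrt 2 / 3) else 0) := by
            refine Finset.sum_congr rfl fun m hm => ?_
            rw [hmom m (Finset.mem_range.1 hm)]
            by_cases h : m = 0
            · subst h; simp
            · simp [h]
        _ = 2 * Real.sqrt 2 / 3 * (Lagrange.basis Finset.univ τ i).coeff 0 := by
            rw [Finset.sum_ite_eq' (Finset.range N) 0]
            rw [if_pos (Finset.mem_range.2 (by omega))]
            ring
    rw [Polynomial.coeff_zero_eq_eval_zero, eval_basis_zero τ hτ i] at e3
    have hτi := (hτpos i).ne'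
    have hdi := (hd i).ne'
    have hprod : (∏ x ∈ Finset.univ.erase i, (τ x - τ i)) ≠ 0 :=
      Finset.prod_ne_zero_iff.2 fun x hx =>
        sub_ne_zero.2 fun h => (Finset.mem_erase.1 hx).1 (hτ h)
    rw [Finset.prod_div_distrib] at e3 ⊢
    field_simp at e3 ⊢
    linear_combination e3
  · intro hα
    have hyw : ∀ j, α j * τ j / d j
        = 2 * Real.sqrt 2 / 3 * (Lagrange.basis Finset.univ τ j).eval 0 := by
      intro j
      have hτj := (hτpos j).ne'
      have hdj := (hd j).ne'
      have hprod : (∏ x ∈ Finset.univ.erase j, (τ x - τ j)) ≠ 0 :=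
        Finset.prod_ne_zero_iff.2 fun x hx =>
          sub_ne_zero.2 fun h => (Finset.mem_erase.1 hx).1 (hτ h)
      rw [eval_basis_zero τ hτ j, hα j, Finset.prod_div_distrib]
      field_simp
    have hmom : ∀ m : ℕ, m < N →
        ∑ j, (α j * τ j / d j) * τ j ^ m = 2 * Real.sqrt 2 / 3 * (0:ℝ) ^ m := by
      intro m hm
      have hdeg : (Polynomial.X ^ m : Polynomial ℝ).degree < (N : ℕ) := by
        rw [Polynomial.degree_X_pow]
        exact_mod_cast hm
      have hkey := sum_w_eval τ hτ (Polynomial.X ^ m) hdeg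
      simp only [Polynomial.eval_pow, Polynomial.eval_X] at hkey
      calc ∑ j, (α j * τ j / d j) * τ j ^ m
          = 2 * Real.sqrt 2 / 3 * ∑ j, τ j ^ m * (Lagrange.basis Finset.univ τ j).eval 0 := by
            rw [Finset.mul_sum]
            exact Finset.sum_congr rfl fun j _ => by rw [hyw j]; ring
        _ = 2 * Real.sqrt 2 / 3 * (0:ℝ) ^ m := by rw [hkey]
    refine ⟨fun k hk1 hkN => ?_, ?_⟩
    · rcases hk1.eq_or_lt with rfl | h2
      · rw [hc 1, if_neg one_ne_zero, if_pos rfl]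
        have hsum : ∑ j, α j * τ j / d j = ∑ j, (α j * τ j / d j) * τ j ^ 0 := by simp
        rw [hsum, hmom 0 (by omega), pow_zero, mul_one]
        linear_combination -h14
      · rw [hc k, if_neg (by omega), if_neg (by omega), hS k (by omega)]
        rw [hmom (k - 1) (by omega), zero_pow (by omega : k - 1 ≠ 0), mul_zero, mul_zero]
    · set p : Polynomial ℝ := Polynomial.X ^ N - Lagrange.nodal Finset.univ τ with hp
      have hdeg : p.degree < (N : ℕ) := by
        have h1 : (Polynomial.X ^ N : Polynomial ℝ).degree = (Lagrange.nodal Finset.univ τ).degree := by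
          rw [Polynomial.degree_X_pow, Lagrange.degree_nodal, Finset.card_univ, Fintype.card_fin]
        have h2 : (Polynomial.X ^ N : Polynomial ℝ) ≠ 0 := pow_ne_zero N Polynomial.X_ne_zero
        have h3 : (Polynomial.X ^ N : Polynomial ℝ).leadingCoeff
            = (Lagrange.nodal Finset.univ τ).leadingCoeff := by
          rw [Polynomial.leadingCoeff_X_pow, Lagrange.nodal_monic.leadingCoeff]
        have := Polynomial.degree_sub_lt h1 h2 h3
        rwa [Polynomial.degree_X_pow, ← hp] at this
      have hkey := sum_w_eval τ hτ p hdeg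
      have heval : ∀ j : Fin N, p.eval (τ j) = τ j ^ N := by
        intro j
        rw [hp, Polynomial.eval_sub, Polynomial.eval_pow, Polynomial.eval_X,
          Lagrange.eval_nodal_at_node (Finset.mem_univ j), sub_zero]
      have hev0 : p.eval 0 ≠ 0 := by
        rw [hp, Polynomial.eval_sub, Polynomial.eval_pow, Polynomial.eval_X,
          Lagrange.eval_nodal, zero_pow (by omega : N ≠ 0), zero_sub, neg_ne_zero]
        exact Finset.prod_ne_zero_iff.2 fun j _ => by
          have := hτpos j; intro h; rw [zero_sub, neg_eq_zero] at h; exact this.ne' h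
      have hSN : ∑ j, (α j * τ j / d j) * τ j ^ N
          = 2 * Real.sqrt 2 / 3 * p.eval 0 := by
        rw [← hkey, Finset.mul_sum]
        refine Finset.sum_congr rfl fun j _ => ?_
        rw [hyw j, heval j]
        ring
      rw [hc (N + 1), if_neg (by omega), if_neg (by omega), hS (N + 1) (by omega)]
      simp only [Nat.add_sub_cancel]
      rw [hSN]
      exact mul_ne_zero (mul_ne_zero (mul_ne_zero hKne (pow_ne_zero _ (by norm_num))) (hfac _))
        (mul_ne_zero (by positivity) hev0)

/-- Taylor expansion of the Evans function `E₀` at `λ = 0`, and characterisation of a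
zero of order exactly `N+1` via the coefficients `α_j`. -/
theorem stmt6 (N : ℕ) (hN : 1 ≤ N) (τ d α : Fin N → ℝ)
    (hτpos : ∀ j, 0 < τ j) (hτ : Function.Injective τ) (hd : ∀ j, 0 < d j)
    (c : ℕ → ℝ)
    (hc : ∀ k, c k = if k = 0 then 0 else if k = 1 then
        1 - 3 * Real.sqrt 2 / 4 * ∑ j, α j * τ j / d j
      else (3 * Real.sqrt 2 / 2) * (-1 : ℝ) ^ k *
        ((Nat.doubleFactorial (2 * k - 1) : ℝ) / (Nat.doubleFactorial (2 * k) : ℝ)) *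
        ∑ j, α j * τ j ^ k / d j) :
    (∀ l : ℝ, (∀ j, τ j * |l| < 1) →
        HasSum (fun k : ℕ => c k * l ^ k)
          (l + 3 * Real.sqrt 2 / 2 *
            ∑ j, α j / d j * (1 / Real.sqrt (1 + τ j * l) - 1))) ∧
    (((∀ k, 1 ≤ k → k ≤ N → c k = 0) ∧ c (N + 1) ≠ 0) ↔
      ∀ j, α j = 2 * Real.sqrt 2 * d j / (3 * τ j) *
        ∏ k ∈ Finset.univ.erase j, τ k / (τ k - τ j)) :=
  ⟨part1 N τ d α hτpos c hc, part2 N hN τ d α hτpos hτ hd c hc⟩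
end

section
/- For integers j ≥ 2 and 0 ≤ i ≤ j−2, the coefficients a_j^i = (2^i/i!) · binom(2j−i, j)/binom(2j, j) satisfy the recurrence (2j/(2j−1)) · a_{j−1}^i = 2(i+1) a_j^{i+1} − (i+1)(i+2) a_j^{i+2}. -/
/-- key: `2(n+1)·C(2(n+1), n+1) = 4(2n+1)·C(2n, n)`. -/
lemma key_choose (n : ℕ) :
    2 * (n + 1) * Nat.choose (2 * (n + 1)) (n + 1) = 4 * (2 * n + 1) * Nat.choose (2 * n) n := by
  have h1 := Nat.add_one_mul_choose_eq (2 * n + 1) n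
  have h2 := Nat.add_one_mul_choose_eq (2 * n) n
  have hsym : Nat.choose (2 * n + 1) n = Nat.choose (2 * n + 1) (n + 1) := by
    have := Nat.choose_symm (n := 2 * n + 1) (k := n + 1) (by omega)
    rwa [show 2 * n + 1 - (n + 1) = n by omega] at this
  have e1 : 2 * (n + 1) = (2 * n + 1) + 1 := by ring
  rw [e1]
  apply Nat.eq_of_mul_eq_mul_left (show 0 < (n + 1) * (n + 1) by positivity)
  rw [hsym] at h1
  nlinarith [h1, h2]

/-- Recurrence relation satisfied by the coefficients `a_j^i`. -/
theorem stmt8 (j i : ℕ) (hj : 2 ≤ j) (hi : i ≤ j - 2) (a : ℕ → ℕ → ℝ)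
    (ha : ∀ j i, a j i = 2 ^ i / (Nat.factorial i : ℝ) *
      ((Nat.choose (2 * j - i) j : ℝ) / (Nat.choose (2 * j) j : ℝ))) :
    (2 * (j : ℝ)) / (2 * (j : ℝ) - 1) * a (j - 1) i =
      2 * ((i : ℝ) + 1) * a j (i + 1) - ((i : ℝ) + 1) * ((i : ℝ) + 2) * a j (i + 2) := by
  obtain ⟨k, rfl⟩ : ∃ k, j = (i + k) + 2 := ⟨j - 2 - i, by omega⟩
  rw [ha, ha, ha]
  rw [show 2 * (i + k + 2) - (i + 1) = i + 2 * k + 3 by omega,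
      show 2 * (i + k + 2) - (i + 2) = i + 2 * k + 2 by omega,
      show i + k + 2 - 1 = i + k + 1 by omega,
      show 2 * (i + k + 1) - i = i + 2 * k + 2 by omega]
  have pascal : (Nat.choose (i + 2 * k + 3) (i + k + 2) : ℝ) =
      Nat.choose (i + 2 * k + 2) (i + k + 1) + Nat.choose (i + 2 * k + 2) (i + k + 2) := by
    rw [show i + 2 * k + 3 = (i + 2 * k + 2) + 1 by ring,
        show i + k + 2 = (i + k + 1) + 1 by ring, Nat.choose_succ_succ]
    push_cast; ring
  have hkey : (2 * ((i : ℝ) + k + 2)) * (Nat.choose (2 * (i + k + 2)) (i + k + 2) : ℝ) =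
      4 * (2 * ((i : ℝ) + k + 1) + 1) * (Nat.choose (2 * (i + k + 1)) (i + k + 1) : ℝ) := by
    have h := congrArg (Nat.cast : ℕ → ℝ) (key_choose (i + k + 1))
    push_cast at h
    linarith [h]
  have hD : (Nat.choose (2 * (i + k + 2)) (i + k + 2) : ℝ) ≠ 0 :=
    Nat.cast_ne_zero.mpr (Nat.choose_pos (by omega)).ne'
  have hD1 : (Nat.choose (2 * (i + k + 1)) (i + k + 1) : ℝ) ≠ 0 :=
    Nat.cast_ne_zero.mpr (Nat.choose_pos (by omega)).ne'
  have hfact : (Nat.factorial i : ℝ) ≠ 0 := Nat.cast_ne_zero.mpr (Nat.factorial_pos i).ne'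
  rw [Nat.factorial_succ (i + 1), Nat.factorial_succ i]
  have hi0 : (0:ℝ) ≤ i := Nat.cast_nonneg i
  have hk0 : (0:ℝ) ≤ k := Nat.cast_nonneg k
  have hden : 2 * ((i : ℝ) + k + 2) - 1 ≠ 0 := by nlinarith
  have hden2 : 4 * (2 * ((i:ℝ) + k + 1) + 1) ≠ 0 := by nlinarith
  have hD1eq : (Nat.choose (2 * (i + k + 1)) (i + k + 1) : ℝ) =
      2 * ((i:ℝ) + k + 2) * (Nat.choose (2 * (i + k + 2)) (i + k + 2) : ℝ) /
        (4 * (2 * ((i:ℝ) + k + 1) + 1)) := by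
    field_simp
    linarith [hkey]
  push_cast
  rw [pascal, hD1eq]
  field_simp
  ring
end

section
/- For integers j ≥ 1, the polynomials f^j(x) = ∑_{i=0}^j (2^i/i!) (binom(2j−i,j)/binom(2j,j)) x^i satisfy the differential recurrence (2j/(2j−1)) f^{j−1}(x) = 2 (f^j)'(x) − (f^j)''(x) for all real x, where f^0(x) = 1. -/
open Finset

lemma deriv_poly_sum (c : ℕ → ℝ) (n : ℕ) :
    deriv (fun x => ∑ i ∈ range (n+1), c i * x ^ i)
      = fun x => ∑ i ∈ range n, c (i+1) * (i+1) * x ^ i := by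
  funext x
  have h : HasDerivAt (fun x : ℝ => ∑ i ∈ range (n+1), c i * x ^ i)
      (∑ i ∈ range (n+1), c i * (i * x ^ (i-1))) x := by
    apply HasDerivAt.fun_sum
    intro i _
    exact (hasDerivAt_pow i x).const_mul (c i)
  rw [h.deriv, Finset.sum_range_succ']
  simp only [Nat.cast_zero, pow_zero, zero_mul, mul_zero, add_zero, Nat.add_sub_cancel]
  exact Finset.sum_congr rfl fun i _ => by push_cast; ring

lemma coeff_identity (i m : ℕ) :
    2 * ((i:ℝ)+m+1) / (2 * ((i:ℝ)+m+1) - 1) *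
      (2 ^ i / (Nat.factorial i : ℝ) * (((i+2*m).choose (i+m) : ℝ) / ((2*(i+m)).choose (i+m) : ℝ))) =
    2 * (2 ^ (i+1) / ((i+1).factorial : ℝ) * (((i+2*m+1).choose (i+m+1) : ℝ) / ((2*(i+m+1)).choose (i+m+1) : ℝ)) * ((i:ℝ)+1))
      - 2 ^ (i+1+1) / ((i+1+1).factorial : ℝ) * (((i+2*m).choose (i+m+1) : ℝ) / ((2*(i+m+1)).choose (i+m+1) : ℝ)) * (((i:ℝ)+1)+1) * ((i:ℝ)+1) := by
  have hB : (i+m+1) * ((2*(i+m+1)).choose (i+m+1)) = 2*(2*(i+m)+1) * ((2*(i+m)).choose (i+m)) :=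
    Nat.succ_mul_centralBinom_succ (i+m)
  have hA : (i+2*m+1).choose (i+m+1) = (i+2*m).choose (i+m) + (i+2*m).choose (i+m+1) :=
    Nat.choose_succ_succ _ _
  have hBR : ((i:ℝ)+m+1) * ((2*(i+m+1)).choose (i+m+1) : ℝ)
      = 2*(2*((i:ℝ)+m)+1) * ((2*(i+m)).choose (i+m) : ℝ) := by exact_mod_cast hB
  have hp : (((2*(i+m)).choose (i+m) : ℝ)) ≠ 0 :=
    Nat.cast_ne_zero.2 (Nat.choose_pos (by omega)).ne'
  have hq : (((2*(i+m+1)).choose (i+m+1) : ℝ)) ≠ 0 :=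
    Nat.cast_ne_zero.2 (Nat.choose_pos (by omega)).ne'
  have hfac : ((Nat.factorial i : ℝ)) ≠ 0 := Nat.cast_ne_zero.2 i.factorial_ne_zero
  have him : (0:ℝ) ≤ (i:ℝ) + m := by positivity
  have hden : 2 * ((i:ℝ)+m+1) - 1 ≠ 0 := by nlinarith
  have hden2 : 2 * ((i:ℝ)+m+1) ≠ 0 := by nlinarith
  have e : (((i+2*m).choose (i+m) : ℝ)) / ((2*(i+m)).choose (i+m) : ℝ)
      = (2 * ((i:ℝ)+m+1) - 1) / (2 * ((i:ℝ)+m+1)) *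
        (4 * ((((i+2*m).choose (i+m) : ℝ)) / ((2*(i+m+1)).choose (i+m+1) : ℝ))) := by
    field_simp
    linear_combination (2 * (((i+2*m).choose (i+m) : ℝ))) * hBR
  rw [e, hA, Nat.factorial_succ (i+1), Nat.factorial_succ i]
  push_cast
  field_simp
  ring

/-- Differential recurrence for the polynomials `f^j`. -/
theorem stmt9 (j : ℕ) (hj : 1 ≤ j) (f : ℕ → ℝ → ℝ)
    (hf : ∀ j x, f j x = ∑ i ∈ Finset.range (j + 1),
      2 ^ i / (Nat.factorial i : ℝ) *
        ((Nat.choose (2 * j - i) j : ℝ) / (Nat.choose (2 * j) j : ℝ)) * x ^ i)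
    (x : ℝ) :
    (2 * (j : ℝ)) / (2 * (j : ℝ) - 1) * f (j - 1) x =
      2 * deriv (f j) x - deriv (deriv (f j)) x := by
  obtain ⟨k, rfl⟩ : ∃ k, j = k + 1 := ⟨j - 1, by omega⟩
  have hfj : f (k+1) = fun x => ∑ i ∈ range (k+1+1),
      (fun i => 2 ^ i / (Nat.factorial i : ℝ) *
        ((Nat.choose (2 * (k+1) - i) (k+1) : ℝ) / (Nat.choose (2 * (k+1)) (k+1) : ℝ))) i * x ^ i := by
    funext y; exact hf (k+1) y
  rw [hfj, deriv_poly_sum, deriv_poly_sum]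
  simp only [Nat.add_sub_cancel, hf k x]
  have hext : (∑ i ∈ Finset.range k,
      2 ^ (i + 1 + 1) / ((i + 1 + 1).factorial : ℝ) *
          ((((2 * (k + 1) - (i + 1 + 1)).choose (k + 1) : ℕ) : ℝ) / (((2 * (k + 1)).choose (k + 1) : ℕ) : ℝ)) *
        (((i:ℝ) + 1) + 1) * ((i:ℝ) + 1) * x ^ i)
      = ∑ i ∈ Finset.range (k+1),
      2 ^ (i + 1 + 1) / ((i + 1 + 1).factorial : ℝ) *
          ((((2 * (k + 1) - (i + 1 + 1)).choose (k + 1) : ℕ) : ℝ) / (((2 * (k + 1)).choose (k + 1) : ℕ) : ℝ)) *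
        (((i:ℝ) + 1) + 1) * ((i:ℝ) + 1) * x ^ i := by
    rw [Finset.sum_range_succ]
    have e : 2 * (k + 1) - (k + 1 + 1) = k := by omega
    rw [e, Nat.choose_eq_zero_of_lt (Nat.lt_succ_self k)]
    push_cast
    ring
  push_cast
  rw [hext, Finset.mul_sum, Finset.mul_sum, ← Finset.sum_sub_distrib]
  refine Finset.sum_congr rfl fun i hi => ?_
  have hik : i ≤ k := by simpa [Nat.lt_succ_iff] using hi
  have hkm : k = i + (k - i) := by omega
  set m := k - i with hm
  rw [hkm]
  have e1 : 2 * (i + m + 1) - (i + 1) = i + 2*m + 1 := by omega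
  have e2 : 2 * (i + m + 1) - (i + 1 + 1) = i + 2*m := by omega
  have e3 : 2 * (i + m) - i = i + 2*m := by omega
  rw [e1, e2, e3]
  have h := coeff_identity i m
  push_cast at h ⊢
  linear_combination x ^ i * h
end

section
/- Fix τ, d ≠ 0 and for j ≥ 0 set v_+^j(x) = (−1)^j ((2j−1)!!/(2j)!!) (τ^j/d) e^{−x} ∑_{i=0}^j (2^i/i!) (binom(2j−i,j)/binom(2j,j)) x^i for x ≥ 0 (with v_+^0(x) = e^{−x}/d). Then for every j ≥ 1 and x ≥ 0: (v_+^j)''(x) = v_+^j(x) + τ v_+^{j−1}(x). -/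
noncomputable def Acoef (j i : ℕ) : ℝ :=
  2 ^ i / (Nat.factorial i : ℝ) * ((Nat.choose (2 * j - i) j : ℝ) / (Nat.choose (2 * j) j : ℝ))

noncomputable def ccoef (τ d : ℝ) (j : ℕ) : ℝ :=
  (-1 : ℝ) ^ j * ((Nat.doubleFactorial (2 * j - 1) : ℝ) / (Nat.doubleFactorial (2 * j) : ℝ)) * (τ ^ j / d)

noncomputable def B1 (b : ℕ → ℝ) : ℕ → ℝ := fun i => ((i : ℝ) + 1) * b (i + 1) - b i

lemma Acoef_eq_zero {j i : ℕ} (hj : 1 ≤ j) (h : j < i) : Acoef j i = 0 := by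
  have : 2 * j - i < j := by omega
  rw [Acoef, Nat.choose_eq_zero_of_lt this]
  simp

lemma core0 (τ d : ℝ) {j i : ℕ} (hj : 1 ≤ j) (hji : j ≤ i) :
    ccoef τ d j * (((i:ℝ)+1)*((i:ℝ)+2) * Acoef j (i+2) - 2*((i:ℝ)+1) * Acoef j (i+1)) = 0 := by
  rw [Acoef_eq_zero hj (by omega), Acoef_eq_zero hj (by omega)]
  ring

lemma expPoly_hasDeriv (N : ℕ) (b : ℕ → ℝ) (hb : b N = 0) (x : ℝ) :
    HasDerivAt (fun y => Real.exp (-y) * ∑ i ∈ Finset.range N, b i * y ^ i)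
      (Real.exp (-x) * ∑ i ∈ Finset.range N, B1 b i * x ^ i) x := by
  have h1 : HasDerivAt (fun y : ℝ => Real.exp (-y)) (-Real.exp (-x)) x := by
    convert (hasDerivAt_neg x).exp using 1; ring
  have h2 : HasDerivAt (fun y : ℝ => ∑ i ∈ Finset.range N, b i * y ^ i)
      (∑ i ∈ Finset.range N, b i * ((i : ℝ) * x ^ (i - 1))) x := by
    apply HasDerivAt.fun_sum
    intro i _
    exact (hasDerivAt_pow i x).const_mul (b i)
  have h3 := h1.fun_mul h2
  have hshift : ∑ i ∈ Finset.range N, b i * ((i : ℝ) * x ^ (i - 1))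
      = ∑ i ∈ Finset.range N, ((i : ℝ) + 1) * b (i+1) * x ^ i := by
    cases N with
    | zero => simp
    | succ n =>
      rw [Finset.sum_range_succ' (fun i => b i * ((i : ℝ) * x ^ (i - 1))) n,
        Finset.sum_range_succ (fun i => ((i : ℝ) + 1) * b (i+1) * x ^ i) n]
      simp only [hb, Nat.cast_zero, zero_mul, mul_zero, add_zero, Nat.cast_succ,
        Nat.add_sub_cancel, pow_zero]
      apply Finset.sum_congr rfl
      intro i _
      ring
  have hsplit : ∑ i ∈ Finset.range N, B1 b i * x ^ i
      = ∑ i ∈ Finset.range N, ((i : ℝ) + 1) * b (i+1) * x ^ i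
        - ∑ i ∈ Finset.range N, b i * x ^ i := by
    rw [← Finset.sum_sub_distrib]
    exact Finset.sum_congr rfl fun i _ => by rw [B1]; ring
  refine h3.congr_deriv ?_
  rw [hsplit, ← hshift]
  ring

lemma dfac_odd (m : ℕ) : Nat.doubleFactorial (2 * m + 1) = (2 * m + 1) * Nat.doubleFactorial (2 * m - 1) := by
  cases m with
  | zero => simp [Nat.doubleFactorial]
  | succ k =>
    have h1 : 2 * (k + 1) + 1 = (2 * k + 1) + 2 := by omega
    have h2 : 2 * (k + 1) - 1 = 2 * k + 1 := by omega
    rw [h1, h2, Nat.doubleFactorial]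

lemma dfac_even (m : ℕ) : Nat.doubleFactorial (2 * m + 2) = (2 * m + 2) * Nat.doubleFactorial (2 * m) := by
  rw [show 2 * m + 2 = (2 * m) + 2 from rfl, Nat.doubleFactorial]

lemma central (m : ℕ) : (m+1)*(m+1) * Nat.choose (2*m+2) (m+1) = (2*m+2)*(2*m+1) * Nat.choose (2*m) m := by
  have h1 := Nat.add_one_mul_choose_eq (2*m+1) m
  have h2 := Nat.add_one_mul_choose_eq (2*m) m
  have h3 : Nat.choose (2*m+1) m = Nat.choose (2*m+1) (m+1) := by
    rw [← Nat.choose_symm (by omega : m + 1 ≤ 2*m+1)]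
    congr 1
    omega
  nlinarith [h1, h2, h3]

set_option maxHeartbeats 1000000 in
lemma core1 (τ d : ℝ) (hd : d ≠ 0) (i t : ℕ) :
    ccoef τ d (i+t+1) * (((i:ℝ)+1)*((i:ℝ)+2) * Acoef (i+t+1) (i+2)
      - 2*((i:ℝ)+1) * Acoef (i+t+1) (i+1))
    = τ * ccoef τ d (i+t) * Acoef (i+t) i := by
  unfold ccoef Acoef
  rw [show 2*(i+t+1) - 1 = 2*(i+t)+1 from by omega,
      show 2*(i+t+1) = 2*(i+t)+2 from by omega,
      show 2*(i+t)+2 - (i+2) = i+2*t from by omega,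
      show 2*(i+t)+2 - (i+1) = (i+2*t)+1 from by omega,
      show 2*(i+t) - i = i+2*t from by omega,
      dfac_odd, dfac_even,
      Nat.choose_succ_succ' (i+2*t) (i+t)]
  have hc := central (i+t)
  have hfac2 : (Nat.factorial (i+2) : ℝ) = ((i:ℝ)+2)*((i:ℝ)+1)*(Nat.factorial i : ℝ) := by
    rw [show i+2 = (i+1)+1 from rfl, Nat.factorial_succ, Nat.factorial_succ]
    push_cast; ring
  have hfac1 : (Nat.factorial (i+1) : ℝ) = ((i:ℝ)+1)*(Nat.factorial i : ℝ) := by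
    rw [Nat.factorial_succ]; push_cast; ring
  have hcR : ((i:ℝ)+(t:ℝ)+1)*((i:ℝ)+(t:ℝ)+1) * (Nat.choose (2*(i+t)+2) (i+t+1) : ℝ)
      = (2*((i:ℝ)+(t:ℝ))+2)*(2*((i:ℝ)+(t:ℝ))+1) * (Nat.choose (2*(i+t)) (i+t) : ℝ) := by
    exact_mod_cast congrArg (Nat.cast : ℕ → ℝ) hc
  have hM : (Nat.choose (2*(i+t)+2) (i+t+1) : ℝ) ≠ 0 := by
    exact_mod_cast Nat.choose_pos (by omega) |>.ne'
  have hM' : (Nat.choose (2*(i+t)) (i+t) : ℝ) ≠ 0 := by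
    exact_mod_cast Nat.choose_pos (by omega) |>.ne'
  have hq : (Nat.doubleFactorial (2*(i+t)) : ℝ) ≠ 0 := by
    exact_mod_cast (Nat.doubleFactorial_pos _).ne'
  have hfi : (Nat.factorial i : ℝ) ≠ 0 := by exact_mod_cast (Nat.factorial_pos i).ne'
  have hi1 : ((i:ℝ)+1) ≠ 0 := by positivity
  have hi2 : ((i:ℝ)+2) ≠ 0 := by positivity
  have hit : ((i:ℝ)+(t:ℝ)+1) ≠ 0 := by positivity
  have hMeq : (Nat.choose (2*(i+t)+2) (i+t+1) : ℝ)
      = (2*((i:ℝ)+(t:ℝ))+2)*(2*((i:ℝ)+(t:ℝ))+1) * (Nat.choose (2*(i+t)) (i+t) : ℝ)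
        / (((i:ℝ)+(t:ℝ)+1)*((i:ℝ)+(t:ℝ)+1)) := by
    rw [eq_div_iff (by positivity)]
    linear_combination hcR
  rw [hfac2, hfac1]
  push_cast
  rw [hMeq]
  field_simp
  ring

/-- The slow-field profiles `v_+^j` solve the nonhomogeneous second-order ODE
`(v_+^j)'' = v_+^j + τ v_+^{j-1}`. -/
theorem stmt10 (τ d : ℝ) (hτ : τ ≠ 0) (hd : d ≠ 0) (v : ℕ → ℝ → ℝ)
    (hv : ∀ j x, v j x = (-1 : ℝ) ^ j *
      ((Nat.doubleFactorial (2 * j - 1) : ℝ) / (Nat.doubleFactorial (2 * j) : ℝ)) *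
      (τ ^ j / d) * Real.exp (-x) *
      ∑ i ∈ Finset.range (j + 1),
        2 ^ i / (Nat.factorial i : ℝ) *
          ((Nat.choose (2 * j - i) j : ℝ) / (Nat.choose (2 * j) j : ℝ)) * x ^ i)
    (j : ℕ) (hj : 1 ≤ j) (x : ℝ) (hx : 0 ≤ x) :
    deriv (deriv (v j)) x = v j x + τ * v (j - 1) x := by
  -- v j as exp times polynomial of length j+2
  have hvf : v j = fun y => ccoef τ d j *
      (Real.exp (-y) * ∑ i ∈ Finset.range (j+2), Acoef j i * y ^ i) := by
    funext y
    rw [hv j y, Finset.sum_range_succ (fun i => Acoef j i * y ^ i) (j+1),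
      Acoef_eq_zero hj (by omega)]
    simp only [ccoef, Acoef]
    ring
  have hbN : Acoef j (j+2) = 0 := Acoef_eq_zero hj (by omega)
  have hb1N : B1 (Acoef j) (j+2) = 0 := by
    rw [B1, Acoef_eq_zero hj (by omega), Acoef_eq_zero hj (by omega)]
    ring
  have hder1 : deriv (v j) = fun y => ccoef τ d j *
      (Real.exp (-y) * ∑ i ∈ Finset.range (j+2), B1 (Acoef j) i * y ^ i) := by
    funext y
    rw [hvf]
    exact ((expPoly_hasDeriv (j+2) (Acoef j) hbN y).const_mul (ccoef τ d j)).deriv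
  have hder2 : deriv (deriv (v j)) x = ccoef τ d j *
      (Real.exp (-x) * ∑ i ∈ Finset.range (j+2), B1 (B1 (Acoef j)) i * x ^ i) := by
    rw [hder1]
    exact ((expPoly_hasDeriv (j+2) (B1 (Acoef j)) hb1N x).const_mul (ccoef τ d j)).deriv
  -- rewrite the right-hand side
  have hvj1 : v (j-1) x = ccoef τ d (j-1) *
      (Real.exp (-x) * ∑ i ∈ Finset.range ((j-1)+1), Acoef (j-1) i * x ^ i) := by
    rw [hv (j-1) x]
    simp only [ccoef, Acoef]
    ring
  have hrange : (j-1)+1 = j := by omega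
  -- the key algebraic identity between the coefficient sums
  have key : ccoef τ d j * (∑ i ∈ Finset.range (j+2), B1 (B1 (Acoef j)) i * x ^ i)
      - ccoef τ d j * (∑ i ∈ Finset.range (j+2), Acoef j i * x ^ i)
      = τ * ccoef τ d (j-1) * (∑ i ∈ Finset.range j, Acoef (j-1) i * x ^ i) := by
    have hzero : ∀ i ∈ Finset.range (j+2), i ∉ Finset.range j →
        ccoef τ d j * (B1 (B1 (Acoef j)) i * x ^ i) - ccoef τ d j * (Acoef j i * x ^ i) = 0 := by
      intro i hi hni
      have hij : j ≤ i := by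
        simp only [Finset.mem_range] at hi hni
        omega
      have hB : B1 (B1 (Acoef j)) i - Acoef j i
          = ((i:ℝ)+1)*((i:ℝ)+2) * Acoef j (i+2) - 2*((i:ℝ)+1) * Acoef j (i+1) := by
        simp only [B1]
        push_cast
        ring
      have h0 := core0 τ d hj hij
      calc ccoef τ d j * (B1 (B1 (Acoef j)) i * x ^ i) - ccoef τ d j * (Acoef j i * x ^ i)
          = (ccoef τ d j * (B1 (B1 (Acoef j)) i - Acoef j i)) * x ^ i := by ring
        _ = 0 := by rw [hB, h0, zero_mul]
    rw [Finset.mul_sum, Finset.mul_sum, ← Finset.sum_sub_distrib,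
      ← Finset.sum_subset (Finset.range_subset_range.mpr (by omega : j ≤ j+2)) hzero,
      Finset.mul_sum]
    apply Finset.sum_congr rfl
    intro i hi
    have hij : i < j := Finset.mem_range.mp hi
    obtain ⟨t, rfl⟩ : ∃ t, j = i + t + 1 := ⟨j - i - 1, by omega⟩
    have hcc := core1 τ d hd i t
    have hB : B1 (B1 (Acoef (i+t+1))) i - Acoef (i+t+1) i
        = ((i:ℝ)+1)*((i:ℝ)+2) * Acoef (i+t+1) (i+2) - 2*((i:ℝ)+1) * Acoef (i+t+1) (i+1) := by
      simp only [B1]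
      push_cast
      ring
    rw [show i+t+1-1 = i+t from by omega]
    calc ccoef τ d (i+t+1) * (B1 (B1 (Acoef (i+t+1))) i * x ^ i)
          - ccoef τ d (i+t+1) * (Acoef (i+t+1) i * x ^ i)
        = (ccoef τ d (i+t+1) * (B1 (B1 (Acoef (i+t+1))) i - Acoef (i+t+1) i)) * x ^ i := by ring
      _ = (τ * ccoef τ d (i+t) * Acoef (i+t) i) * x ^ i := by rw [hB, hcc]
      _ = τ * ccoef τ d (i+t) * (Acoef (i+t) i * x ^ i) := by ring
  rw [hder2, hvj1, hrange, hvf]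
  simp only []
  linear_combination Real.exp (-x) * key
end

section
/- Define polynomials g^j by g^0(y) = 1, g^1(y) = 1 + y, and g^{j+1}(y) = g^j(y) + y²/((2j−1)(2j+1)) · g^{j−1}(y) for j ≥ 1. Also define f^j(y) = ∑_{i=0}^j (2^i/i!) (binom(2j−i,j)/binom(2j,j)) y^i. Then g^j = f^j for all j ≥ 0. -/
private lemma key (j i : ℕ) (hj : 1 ≤ j) (hi : i ≤ j + 1) :
    ((j : ℤ) * (j + 1) * ((2 * j + 2 - i).choose (j + 1) : ℤ)) =
      2 * j * (2 * j + 1) * ((2 * j - i).choose j : ℤ)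
        + i * (i - 1) * ((2 * j - i).choose (j - 1) : ℤ) := by
  obtain ⟨m, rfl⟩ : ∃ m, j = m + 1 := ⟨j - 1, by omega⟩
  rcases eq_or_lt_of_le hi with rfl | hlt
  · have h1 : 2 * (m + 1) + 2 - (m + 1 + 1) = m + 2 := by omega
    have h2 : 2 * (m + 1) - (m + 1 + 1) = m := by omega
    simp [h1, h2, Nat.choose_self, Nat.choose_succ_self]
    ring
  · have hij : i ≤ m + 1 := by omega
    set n := 2 * (m + 1) - i with hn
    have hnm : m + 1 ≤ n := by omega
    have h1 : 2 * (m + 1) + 2 - i = n + 2 := by omega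
    rw [h1]
    have pascal : (n + 2).choose (m + 2) =
        n.choose m + n.choose (m + 1) + (n.choose (m + 1) + n.choose (m + 2)) := by
      rw [Nat.choose_succ_succ (n+1) (m+1), Nat.choose_succ_succ n m, Nat.choose_succ_succ n (m+1)]
    have E1 : (n.choose (m + 2) : ℤ) * (m + 2) = (n.choose (m + 1) : ℤ) * ((n : ℤ) - (m + 1)) := by
      have h := Nat.choose_succ_right_eq n (m + 1)
      zify [hnm] at h; linarith
    have E2 : (n.choose (m + 1) : ℤ) * (m + 1) = (n.choose m : ℤ) * ((n : ℤ) - m) := by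
      have h := Nat.choose_succ_right_eq n m
      zify [show m ≤ n by omega] at h; linarith
    have hni : (n : ℤ) = 2 * (m + 1) - i := by omega
    rw [show m + 1 + 1 = m + 2 from rfl, pascal]
    simp only [Nat.add_sub_cancel]
    push_cast
    linear_combination ((m : ℤ) + 1) * E1 - ((m : ℤ) + 1 + i) * E2 + (((m : ℤ) + 1) * (n.choose (m+1) : ℤ) - ((m : ℤ) + 1 + i) * (n.choose m : ℤ)) * hni

/-- the closed-form coefficients -/
noncomputable def cc (j i : ℕ) : ℝ :=
  2 ^ i / (Nat.factorial i : ℝ) * ((Nat.choose (2 * j - i) j : ℝ) / (Nat.choose (2 * j) j : ℝ))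

lemma centralQ (j : ℕ) : ((j : ℝ) + 1) * ((2 * (j + 1)).choose (j + 1) : ℝ)
    = 2 * (2 * (j : ℝ) + 1) * ((2 * j).choose j : ℝ) := by
  have h := Nat.succ_mul_centralBinom_succ j
  have : ((j + 1) * Nat.centralBinom (j + 1) : ℕ) = (2 * (2 * j + 1) * Nat.centralBinom j : ℕ) := h
  have := congrArg (Nat.cast : ℕ → ℝ) this
  push_cast [Nat.centralBinom] at this
  linarith

lemma choosepos (j : ℕ) : (0 : ℝ) < ((2 * j).choose j : ℝ) := by
  exact_mod_cast Nat.choose_pos (by omega)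

set_option maxHeartbeats 2000000 in
lemma coeff (j i : ℕ) (hj : 1 ≤ j) (hi : i + 2 ≤ j + 1) :
    cc (j + 1) (i + 2) = cc j (i + 2)
      + 1 / ((2 * (j : ℝ) - 1) * (2 * (j : ℝ) + 1)) * cc (j - 1) i := by
  obtain ⟨m, rfl⟩ : ∃ m, j = m + 1 := ⟨j - 1, by omega⟩
  simp only [Nat.add_sub_cancel, cc]
  have him : i ≤ m := by omega
  -- index normalizations
  have h1 : 2 * (m + 1 + 1) - (i + 2) = 2 * (m + 1) - i := by omega
  have h2 : 2 * (m + 1) - (i + 2) = 2 * m - i := by omega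
  rw [h1, h2]
  set A : ℝ := ((2 * (m + 1) - i).choose (m + 2) : ℝ) with hA
  set B : ℝ := ((2 * m - i).choose (m + 1) : ℝ) with hB
  set D : ℝ := ((2 * m - i).choose m : ℝ) with hD
  set P : ℝ := ((2 * (m + 1 + 1)).choose (m + 1 + 1) : ℝ) with hP
  set Q : ℝ := ((2 * (m + 1)).choose (m + 1) : ℝ) with hQ
  set R : ℝ := ((2 * m).choose m : ℝ) with hR
  have hPQ : ((m : ℝ) + 1 + 1) * P = 2 * (2 * ((m : ℝ) + 1) + 1) * Q := by
    have := centralQ (m + 1); push_cast at this ⊢; linarith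
  have hQR : ((m : ℝ) + 1) * Q = 2 * (2 * (m : ℝ) + 1) * R := by
    have := centralQ m; push_cast at this ⊢; linarith
  have hkey : ((m : ℝ) + 1) * ((m : ℝ) + 2) * A
      = 2 * ((m : ℝ) + 1) * (2 * ((m : ℝ) + 1) + 1) * B + ((i : ℝ) + 2) * ((i : ℝ) + 1) * D := by
    have h := key (m + 1) (i + 2) (by omega) (by omega)
    have e1 : 2 * (m + 1) + 2 - (i + 2) = 2 * (m + 1) - i := by omega
    have e2 : 2 * (m + 1) - (i + 2) = 2 * m - i := by omega
    rw [e1, e2] at h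
    simp only [Nat.add_sub_cancel] at h
    have := congrArg (Int.cast : ℤ → ℝ) h
    push_cast at this
    rw [hA, hB, hD]
    nlinarith [this]
  have hPpos : (0 : ℝ) < P := choosepos (m + 2)
  have hQpos : (0 : ℝ) < Q := choosepos (m + 1)
  have hRpos : (0 : ℝ) < R := choosepos m
  have hfac : ((i + 2).factorial : ℝ) = ((i : ℝ) + 2) * ((i : ℝ) + 1) * (i.factorial : ℝ) := by
    rw [Nat.factorial_succ, Nat.factorial_succ]; push_cast; ring
  have hf0 : (i.factorial : ℝ) ≠ 0 := by exact_mod_cast i.factorial_ne_zero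
  have hQ0 : Q ≠ 0 := ne_of_gt hQpos
  have hR0 : R ≠ 0 := ne_of_gt hRpos
  have hm2 : ((m : ℝ) + 2) ≠ 0 := by positivity
  have hm1 : ((m : ℝ) + 1) ≠ 0 := by positivity
  have hm21 : (2 * (m : ℝ) + 1) ≠ 0 := by positivity
  have hm23 : (2 * ((m : ℝ) + 1) + 1) ≠ 0 := by positivity
  have hmm1 : (2 * ((m : ℝ) + 1) - 1) ≠ 0 := by
    have : (2 * ((m : ℝ) + 1) - 1) = 2 * (m : ℝ) + 1 := by ring
    rw [this]; positivity
  have hA' : A = (2 * ((m : ℝ) + 1) * (2 * ((m : ℝ) + 1) + 1) * B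
      + ((i : ℝ) + 2) * ((i : ℝ) + 1) * D) / (((m : ℝ) + 1) * ((m : ℝ) + 2)) := by
    field_simp
    nlinarith [hkey]
  have hP' : P = 2 * (2 * ((m : ℝ) + 1) + 1) * Q / ((m : ℝ) + 2) := by
    field_simp
    nlinarith [hPQ]
  have hR' : R = ((m : ℝ) + 1) * Q / (2 * (2 * (m : ℝ) + 1)) := by
    field_simp
    nlinarith [hQR]
  rw [hfac, hA', hP', hR']
  push_cast
  field_simp
  ring

noncomputable def FF (j : ℕ) (y : ℝ) : ℝ := ∑ i ∈ Finset.range (j + 1), cc j i * y ^ i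

lemma cc_zero (j : ℕ) : cc j 0 = 1 := by
  have := choosepos j
  simp [cc, Nat.sub_zero]
  exact_mod_cast this.ne'

lemma cc_one (j : ℕ) (hj : 1 ≤ j) : cc j 1 = 1 := by
  obtain ⟨m, rfl⟩ : ∃ m, j = m + 1 := ⟨j - 1, by omega⟩
  have hsym : (2 * (m + 1) - 1).choose m = (2 * (m + 1) - 1).choose (m + 1) := by
    have : 2 * (m + 1) - 1 = 2 * m + 1 := by omega
    rw [this]
    exact (Nat.choose_symm_half m).symm
  have hpas : (2 * (m + 1)).choose (m + 1) = 2 * ((2 * (m + 1) - 1).choose (m + 1)) := by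
    have h : 2 * (m + 1) = (2 * m + 1) + 1 := by omega
    rw [h, Nat.choose_succ_succ (2 * m + 1) m]
    have h2 : 2 * (m + 1) - 1 = 2 * m + 1 := by omega
    norm_num
    rw [h2] at hsym
    omega
  have hpos : (0 : ℝ) < ((2 * (m + 1) - 1).choose (m + 1) : ℝ) := by
    exact_mod_cast Nat.choose_pos (by omega)
  simp only [cc, hpas]
  rw [Nat.factorial_one]
  push_cast
  field_simp

lemma cc_top (j : ℕ) (hj : 1 ≤ j) : cc j (j + 1) = 0 := by
  have h : 2 * j - (j + 1) = j - 1 := by omega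
  simp [cc, h, Nat.choose_eq_zero_of_lt (show j - 1 < j by omega)]

lemma Frec (j : ℕ) (hj : 1 ≤ j) (y : ℝ) :
    FF (j + 1) y = FF j y
      + y ^ 2 / ((2 * (j : ℝ) - 1) * (2 * (j : ℝ) + 1)) * FF (j - 1) y := by
  obtain ⟨m, rfl⟩ : ∃ m, j = m + 1 := ⟨j - 1, by omega⟩
  simp only [Nat.add_sub_cancel, FF]
  have hext : ∑ i ∈ Finset.range (m + 2), cc (m + 1) i * y ^ i
      = ∑ i ∈ Finset.range (m + 3), cc (m + 1) i * y ^ i := by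
    rw [Finset.sum_range_succ (n := m + 2)]
    rw [cc_top (m + 1) (by omega)]
    ring
  rw [hext]
  rw [Finset.sum_range_succ' _ (m + 2), Finset.sum_range_succ' _ (m + 1),
    Finset.sum_range_succ' (fun i => cc (m + 1) i * y ^ i) (m + 2),
    Finset.sum_range_succ' (fun i => cc (m + 1) (i + 1) * y ^ (i + 1)) (m + 1)]
  rw [cc_zero, cc_zero, cc_one (m + 2) (by omega), cc_one (m + 1) (by omega)]
  have hcongr : ∑ k ∈ Finset.range (m + 1), cc (m + 1 + 1) (k + 1 + 1) * y ^ (k + 1 + 1)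
      = ∑ k ∈ Finset.range (m + 1), (cc (m + 1) (k + 1 + 1) * y ^ (k + 1 + 1)
          + y ^ 2 / ((2 * ((m + 1 : ℕ) : ℝ) - 1) * (2 * ((m + 1 : ℕ) : ℝ) + 1))
              * (cc m k * y ^ k)) := by
    refine Finset.sum_congr rfl fun k hk => ?_
    simp only [Finset.mem_range] at hk
    rw [show k + 1 + 1 = k + 2 from rfl, coeff (m + 1) k (by omega) (by omega)]
    simp only [Nat.add_sub_cancel]
    ring
  rw [hcongr, Finset.sum_add_distrib, ← Finset.mul_sum]
  ring

/-- The three-term recurrence family `g^j` coincides with the closed-form polynomials `f^j`. -/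
theorem stmt11 (g : ℕ → ℝ → ℝ)
    (hg0 : ∀ y, g 0 y = 1) (hg1 : ∀ y, g 1 y = 1 + y)
    (hgrec : ∀ j, 1 ≤ j → ∀ y : ℝ,
      g (j + 1) y = g j y + y ^ 2 / ((2 * (j : ℝ) - 1) * (2 * (j : ℝ) + 1)) * g (j - 1) y) :
    ∀ j y, g j y = ∑ i ∈ Finset.range (j + 1),
      2 ^ i / (Nat.factorial i : ℝ) *
        ((Nat.choose (2 * j - i) j : ℝ) / (Nat.choose (2 * j) j : ℝ)) * y ^ i := by
  have hF0 : ∀ y : ℝ, FF 0 y = 1 := by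
    intro y; simp [FF, cc_zero]
  have hF1 : ∀ y : ℝ, FF 1 y = 1 + y := by
    intro y
    simp [FF, Finset.sum_range_succ, cc_zero, cc_one 1 le_rfl]
  have main : ∀ j, (∀ y, g j y = FF j y) ∧ (∀ y, g (j + 1) y = FF (j + 1) y) := by
    intro j
    induction j with
    | zero => exact ⟨fun y => (hg0 y).trans (hF0 y).symm, fun y => (hg1 y).trans (hF1 y).symm⟩
    | succ n ih =>
      refine ⟨ih.2, fun y => ?_⟩
      rw [hgrec (n + 1) (by omega) y, ih.2 y, Nat.add_sub_cancel, ih.1 y,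
        Frec (n + 1) (by omega) y, Nat.add_sub_cancel]
  intro j y
  have := (main j).1 y
  rw [this]
  simp only [FF, cc]
end
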